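/- Assume r and t are compatible (r_i ≤ r_{i''} ⇔ t_i ≤ t_{i''} for all i, i'' ∈ Ī) and e_{i'} ≥ r_i for all i ∈ Ī. Fix the expedited supplier i' ∈ Ī and base stock S ∈ {0,…,S̄}. If k' : {1,…,L} → Ī is a rearrangement of an injective level map k (i.e., k' = k ∘ σ for a permutation σ of {1,…,L}) such that the regular costs r_{k'(1)} ≤ r_{k'(2)} ≤ … ≤ r_{k'(L)} are nondecreasing along levels, then C̄(k', i', S) ≤ C̄(k, i', S). Hence sorting a terminal's assigned regular suppliers by increasing regular shipment cost never increases the expected cost. -/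

import Mathlib

/-- Truncated-Poisson stock-out probability
`P(λ, S) = (λ^S / S!) / (∑_{s=0}^{S} λ^s / s!)`. -/
noncomputable def stockout (lam : ℝ) (S : ℕ) : ℝ :=
  (lam ^ S / (Nat.factorial S : ℝ)) /
    (∑ s ∈ Finset.range (S + 1), lam ^ s / (Nat.factorial s : ℝ))

/-- Expected operational cost `C̄(k, i', S)` of assigning the injective level map `k`
of regular suppliers, expedited supplier `i'`, and base stock `S`:
`C̄(k,i',S) = h·S + d·∑_{l=1}^{L} (1−q)·q^{l−1}·[ r_{k(l)}·(1 − P(d·t_{k(l)}, S))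
 + e_{i'}·P(d·t_{k(l)}, S) ] + d·e_{i'}·q^L`. -/
noncomputable def Cbar {ι : Type*} [Fintype ι] (r t e : ι → ℝ) (d q h : ℝ) (L : ℕ)
    (k : Fin L → ι) (i' : ι) (S : ℕ) : ℝ :=
  h * S +
    d * ∑ l : Fin L, (1 - q) * q ^ (l : ℕ) *
      (r (k l) * (1 - stockout (d * t (k l)) S) + e i' * stockout (d * t (k l)) S) +
    d * e i' * q ^ L

lemma denom_pos (lam : ℝ) (hl : 0 < lam) (S : ℕ) :
    0 < ∑ s ∈ Finset.range (S + 1), lam ^ s / (Nat.factorial s : ℝ) := by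
  apply Finset.sum_pos
  · intro s _
    positivity
  · exact ⟨0, Finset.mem_range.2 (Nat.succ_pos S)⟩

lemma stockout_nonneg (lam : ℝ) (hl : 0 < lam) (S : ℕ) : 0 ≤ stockout lam S := by
  unfold stockout
  have := denom_pos lam hl S
  positivity

lemma stockout_le_one (lam : ℝ) (hl : 0 < lam) (S : ℕ) : stockout lam S ≤ 1 := by
  unfold stockout
  rw [div_le_one (denom_pos lam hl S)]
  exact Finset.single_le_sum (f := fun s => lam ^ s / (Nat.factorial s : ℝ))
    (fun s _ => by positivity) (Finset.mem_range.2 (Nat.lt_succ_self S))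

lemma stockout_mono {lam mu : ℝ} (hl : 0 < lam) (hlm : lam ≤ mu) (S : ℕ) :
    stockout lam S ≤ stockout mu S := by
  have hm : 0 < mu := lt_of_lt_of_le hl hlm
  unfold stockout
  rw [div_le_div_iff₀ (denom_pos lam hl S) (denom_pos mu hm S)]
  rw [div_mul_eq_mul_div, div_mul_eq_mul_div, div_le_div_iff₀ (by positivity) (by positivity)]
  rw [Finset.mul_sum, Finset.mul_sum, Finset.sum_mul, Finset.sum_mul]
  apply Finset.sum_le_sum
  intro s hs
  have hsS : s ≤ S := Nat.lt_succ_iff.mp (Finset.mem_range.mp hs)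
  have hss : S - s + s = S := Nat.sub_add_cancel hsS
  have h1 : lam ^ (S - s) ≤ mu ^ (S - s) := pow_le_pow_left₀ hl.le hlm _
  have elam : lam ^ S = lam ^ (S - s) * lam ^ s := by rw [← pow_add, hss]
  have emu : mu ^ S = mu ^ (S - s) * mu ^ s := by rw [← pow_add, hss]
  have key : lam ^ S * mu ^ s ≤ mu ^ S * lam ^ s := by
    rw [elam, emu]
    calc lam ^ (S - s) * lam ^ s * mu ^ s = lam ^ (S - s) * (lam ^ s * mu ^ s) := by ring
      _ ≤ mu ^ (S - s) * (lam ^ s * mu ^ s) := mul_le_mul_of_nonneg_right h1 (by positivity)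
      _ = mu ^ (S - s) * mu ^ s * lam ^ s := by ring
  have hfS : (0:ℝ) < (Nat.factorial S : ℝ) := by positivity
  have hfs : (0:ℝ) < (Nat.factorial s : ℝ) := by positivity
  calc lam ^ S * (mu ^ s / (Nat.factorial s : ℝ)) * (Nat.factorial S : ℝ)
      = (lam ^ S * mu ^ s) * ((Nat.factorial S : ℝ) / (Nat.factorial s : ℝ)) := by ring
    _ ≤ (mu ^ S * lam ^ s) * ((Nat.factorial S : ℝ) / (Nat.factorial s : ℝ)) :=
        mul_le_mul_of_nonneg_right key (by positivity)
    _ = mu ^ S * (lam ^ s / (Nat.factorial s : ℝ)) * (Nat.factorial S : ℝ) := by ring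

theorem stmt_10 {ι : Type*} [Fintype ι] [Nonempty ι]
    (r t e : ι → ℝ) (d q h : ℝ) (L Sbar : ℕ)
    (hd : 0 < d) (hq0 : 0 < q) (hq1 : q < 1) (hh : 0 ≤ h) (hL : 1 ≤ L)
    (hcard : L ≤ Fintype.card ι) (ht : ∀ i, 0 < t i)
    (hcompat : ∀ i i'' : ι, r i ≤ r i'' ↔ t i ≤ t i'')
    (i' : ι) (he : ∀ i : ι, r i ≤ e i')
    (k : Fin L → ι) (hk : Function.Injective k)
    (σ : Equiv.Perm (Fin L)) (k' : Fin L → ι) (hk' : k' = k ∘ σ)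
    (hsorted : Monotone fun l : Fin L => r (k' l))
    (S : ℕ) (hS : S ≤ Sbar) :
    Cbar r t e d q h L k' i' S ≤ Cbar r t e d q h L k i' S := by
  set F : ι → ℝ := fun i =>
    r i * (1 - stockout (d * t i) S) + e i' * stockout (d * t i) S with hF
  set w : Fin L → ℝ := fun l => (1 - q) * q ^ (l : ℕ) with hw
  set g : Fin L → ℝ := fun l => F (k' l) with hg
  -- F is monotone along sorted r
  have hFmono : Monotone g := by
    intro i j hij
    have hr : r (k' i) ≤ r (k' j) := hsorted hij
    have htt : t (k' i) ≤ t (k' j) := (hcompat _ _).mp hr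
    have hP : stockout (d * t (k' i)) S ≤ stockout (d * t (k' j)) S :=
      stockout_mono (mul_pos hd (ht _)) (by nlinarith [ht (k' i), ht (k' j)]) S
    have h0 : 0 ≤ stockout (d * t (k' i)) S := stockout_nonneg _ (mul_pos hd (ht _)) _
    have h1 : stockout (d * t (k' j)) S ≤ 1 := stockout_le_one _ (mul_pos hd (ht _)) _
    have hE : r (k' i) ≤ e i' := he _
    simp only [hg, hF]
    nlinarith [mul_nonneg (sub_nonneg.2 hr) (sub_nonneg.2 h1),
      mul_nonneg (sub_nonneg.2 hE) (sub_nonneg.2 hP)]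
  -- w is antitone
  have hwanti : Antitone w := by
    intro i j hij
    simp only [hw]
    exact mul_le_mul_of_nonneg_left
      (pow_le_pow_of_le_one hq0.le hq1.le hij) (by linarith)
  have hanti : Antivary w g := by
    intro i j hgij
    have hij : i < j := by
      by_contra hc
      push_neg at hc
      exact hgij.not_ge (hFmono hc)
    exact hwanti hij.le
  have key : ∑ l : Fin L, w l * g l ≤ ∑ l : Fin L, w l * g (σ⁻¹ l) := by
    have := hanti.sum_smul_le_sum_smul_comp_perm (σ := σ⁻¹)
    simpa [smul_eq_mul] using this
  have hgσ : ∀ l : Fin L, g (σ⁻¹ l) = F (k l) := by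
    intro l
    simp [hg, hk', Function.comp, Equiv.Perm.coe_inv, Equiv.apply_symm_apply]
  unfold Cbar
  have hsum : ∑ l : Fin L, (1 - q) * q ^ (l : ℕ) *
      (r (k' l) * (1 - stockout (d * t (k' l)) S) + e i' * stockout (d * t (k' l)) S)
      ≤ ∑ l : Fin L, (1 - q) * q ^ (l : ℕ) *
      (r (k l) * (1 - stockout (d * t (k l)) S) + e i' * stockout (d * t (k l)) S) := by
    calc (∑ l : Fin L, w l * g l) ≤ ∑ l : Fin L, w l * g (σ⁻¹ l) := key
      _ = ∑ l : Fin L, w l * F (k l) := by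
          apply Finset.sum_congr rfl; intro l _; rw [hgσ l]
  have := mul_le_mul_of_nonneg_left hsum hd.le
  linarith
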